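/- Let H be a connected hypergraph and 𝒫 = {V₁,…,V_k} a feasible partition of V such that the shrunk hypergraph H_𝒫 has a cut vertex v_j. Then there exist two feasible partitions 𝒫₁ and 𝒫₂ of V with |𝒫₁| + |𝒫₂| = |𝒫| + 1, |𝒫₁|, |𝒫₂| ≥ 2, δ(𝒫₁) and δ(𝒫₂) disjoint with union δ(𝒫), and the vector (1/(|𝒫|-1))·1_{δ(𝒫)} is a proper convex combination of (1/(|𝒫₁|-1))·1_{δ(𝒫₁)} and (1/(|𝒫₂|-1))·1_{δ(𝒫₂)}. -/

import Mathlib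

open Finset
open scoped Classical

noncomputable section

variable {V E : Type*}

/-- The set of hyperedges meeting at least two parts of the partition `P` (the cut `δ(P)`). -/
def hcut [Fintype V] [DecidableEq V] [Fintype E] (edge : E → Finset V)
    (P : Finpartition (univ : Finset V)) : Finset E :=
  univ.filter fun e => ∃ p ∈ P.parts, ∃ q ∈ P.parts,
    p ≠ q ∧ (edge e ∩ p).Nonempty ∧ (edge e ∩ q).Nonempty

/-- The hyperedges entirely contained in the vertex set `X`. -/
def edgesIn [DecidableEq V] [Fintype E] (edge : E → Finset V) (X : Finset V) : Finset E :=
  univ.filter fun e => edge e ⊆ X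

/-- The strength `S(H)`. -/
def strength [Fintype V] [DecidableEq V] [Fintype E] (edge : E → Finset V) : ℝ :=
  sInf { r : ℝ | ∃ P : Finpartition (univ : Finset V), 2 ≤ P.parts.card ∧
    r = ((hcut edge P).card : ℝ) / ((P.parts.card : ℝ) - 1) }

/-- The weighted strength `S_σ(H)`. -/
def strengthW [Fintype V] [DecidableEq V] [Fintype E] (σ : E → ℝ) (edge : E → Finset V) : ℝ :=
  sInf { r : ℝ | ∃ P : Finpartition (univ : Finset V), 2 ≤ P.parts.card ∧
    r = (∑ e ∈ hcut edge P, σ e) / ((P.parts.card : ℝ) - 1) }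

/-- The fractional arboricity `D(H)`. -/
def arboricity [Fintype V] [DecidableEq V] [Fintype E] (edge : E → Finset V) : ℝ :=
  sSup { r : ℝ | ∃ X : Finset V, 2 ≤ X.card ∧
    r = ((edgesIn edge X).card : ℝ) / ((X.card : ℝ) - 1) }

/-- Connectivity of the subhypergraph induced by the vertex set `W`
(only hyperedges contained in `W` are used). -/
def ConnectedIn (edge : E → Finset V) (W : Finset V) : Prop :=
  ∀ X ⊆ W, X.Nonempty → X ≠ W →
    ∃ e, edge e ⊆ W ∧ (edge e ∩ X).Nonempty ∧ ((edge e ∩ W) \ X).Nonempty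

/-- Connectivity of the trace hypergraph on the vertex set `W`
(each hyperedge is replaced by its intersection with `W`, as in vertex deletion). -/
def ConnectedOn (edge : E → Finset V) (W : Finset V) : Prop :=
  ∀ X ⊆ W, X.Nonempty → X ≠ W →
    ∃ e, ((edge e ∩ W) ∩ X).Nonempty ∧ ((edge e ∩ W) \ X).Nonempty

/-- A hypergraph is connected if every nonempty proper vertex subset is crossed by a hyperedge. -/
def HConnected [Fintype V] (edge : E → Finset V) : Prop :=
  ConnectedIn edge univ

/-- `H` is partition-connected if `|δ(P)| ≥ |P| - 1` for every partition `P` of `V`. -/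
def PartitionConnected [Fintype V] [DecidableEq V] [Fintype E] (edge : E → Finset V) : Prop :=
  ∀ P : Finpartition (univ : Finset V), P.parts.card - 1 ≤ (hcut edge P).card

/-- A partition is feasible if each part induces a connected subhypergraph. -/
def Feasible [Fintype V] [DecidableEq V] (edge : E → Finset V) (P : Finpartition (univ : Finset V)) : Prop :=
  ∀ p ∈ P.parts, ConnectedIn edge p

/-- The edges of the shrunk hypergraph `H_P`: vertices are the parts of `P`, and a hyperedge
becomes the set of parts it meets. -/
def shrunkEdge [Fintype V] [DecidableEq V] (edge : E → Finset V)
    (P : Finpartition (univ : Finset V)) (e : E) : Finset {p : Finset V // p ∈ P.parts} :=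
  univ.filter fun p => (edge e ∩ p.1).Nonempty

/-- The shrunk hypergraph `H_P` is vertex-biconnected: it is connected and no single
vertex deletion disconnects it. -/
def ShrunkBiconnected [Fintype V] [DecidableEq V] [Fintype E] (edge : E → Finset V)
    (P : Finpartition (univ : Finset V)) : Prop :=
  ConnectedIn (shrunkEdge edge P) univ ∧
  ∀ p : {p : Finset V // p ∈ P.parts}, ConnectedOn (shrunkEdge edge P) (univ \ {p})

/-- `F` is a hypertree: a hyperforest of size `|V| - 1`. -/
def IsHypertree [Fintype V] [DecidableEq V] (edge : E → Finset V) (F : Finset E) : Prop :=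
  F.card = Fintype.card V - 1 ∧
  ∀ X : Finset V, X.Nonempty → (F.filter fun e => edge e ⊆ X).card ≤ X.card - 1

/-- `m` is the multiplicity vector of a multiset of hyperedges forming a hypertree on `V`. -/
def IsMultiTree [Fintype V] [DecidableEq V] [Fintype E] (edge : E → Finset V) (m : E → ℕ) : Prop :=
  (∑ e, m e) = Fintype.card V - 1 ∧
  ∀ X : Finset V, X.Nonempty → (∑ e ∈ edgesIn edge X, m e) ≤ X.card - 1

/-- The multi-tree family `Ω(H)` as a set of usage vectors in `ℝ^E`. -/
def OmegaSet [Fintype V] [DecidableEq V] [Fintype E] (edge : E → Finset V) : Set (E → ℝ) :=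
  { x | ∃ m : E → ℕ, IsMultiTree edge m ∧ x = fun e => (m e : ℝ) }

/-- The hypertree family `Γ(H)` as a set of (indicator) usage vectors in `ℝ^E`. -/
def GammaSet [Fintype V] [DecidableEq V] [Fintype E] (edge : E → Finset V) : Set (E → ℝ) :=
  { x | ∃ F : Finset E, IsHypertree edge F ∧ x = fun e => if e ∈ F then (1 : ℝ) else 0 }

/-- The admissible set of a family of usage vectors. -/
def AdmSet [Fintype E] (G : Set (E → ℝ)) : Set (E → ℝ) :=
  { ρ | (∀ e, 0 ≤ ρ e) ∧ ∀ x ∈ G, 1 ≤ ∑ e, x e * ρ e }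

/-- The weighted 1-modulus of a family of usage vectors. -/
def Mod1 [Fintype E] (σ : E → ℝ) (G : Set (E → ℝ)) : ℝ :=
  sInf { t : ℝ | ∃ ρ ∈ AdmSet G, t = ∑ e, σ e * ρ e }

/-- `w` is an extreme point of `S`: it lies in `S` and is not the midpoint of two
distinct points of `S`. -/
def IsExtremePt [Fintype E] (S : Set (E → ℝ)) (w : E → ℝ) : Prop :=
  w ∈ S ∧ ∀ y ∈ S, ∀ z ∈ S, (∀ e, w e = (y e + z e) / 2) → y = z

/-- The rank function of the hypergraphic matroid `M(H)` (Frank et al.):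
`r(F) = min { |V| - |P| + |δ_F(P)| }` over partitions `P` of `V`. -/
def hrank [Fintype V] [DecidableEq V] [Fintype E] [DecidableEq E]
    (edge : E → Finset V) (F : Finset E) : ℕ :=
  sInf { n : ℕ | ∃ P : Finpartition (univ : Finset V),
    n = Fintype.card V - P.parts.card + (hcut edge P ∩ F).card }

/-- The (unweighted) strength of the hypergraphic matroid `M(H)`. -/
def mstrength [Fintype V] [DecidableEq V] [Fintype E] [DecidableEq E]
    (edge : E → Finset V) : ℝ :=
  sInf { r : ℝ | ∃ X : Finset E, hrank edge (univ \ X) < hrank edge univ ∧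
    r = (X.card : ℝ) / ((hrank edge univ : ℝ) - (hrank edge (univ \ X) : ℝ)) }

/-- The fractional arboricity of the hypergraphic matroid `M(H)`. -/
def marboricity [Fintype V] [DecidableEq V] [Fintype E] [DecidableEq E]
    (edge : E → Finset V) : ℝ :=
  sSup { r : ℝ | ∃ X : Finset E, 0 < hrank edge X ∧ r = (X.card : ℝ) / (hrank edge X : ℝ) }

end

section AuxStmt5

variable {V E : Type*} [Fintype V] [DecidableEq V]

lemma connectedIn_iff {V E : Type*} [DecidableEq V] (edge : E → Finset V) (W : Finset V) :
    ConnectedIn edge W ↔ ∀ X ⊆ W, X.Nonempty → X ≠ W →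
      ∃ e, edge e ⊆ W ∧ (edge e ∩ X).Nonempty ∧ ((edge e ∩ W) \ X).Nonempty := by
  unfold ConnectedIn
  rw [Subsingleton.elim (fun a b => Classical.propDecidable (a = b) : DecidableEq V) ‹_›]

lemma connectedOn_iff {V E : Type*} [DecidableEq V] (edge : E → Finset V) (W : Finset V) :
    ConnectedOn edge W ↔ ∀ X ⊆ W, X.Nonempty → X ≠ W →
      ∃ e, ((edge e ∩ W) ∩ X).Nonempty ∧ ((edge e ∩ W) \ X).Nonempty := by
  unfold ConnectedOn
  rw [Subsingleton.elim (fun a b => Classical.propDecidable (a = b) : DecidableEq V) ‹_›]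

/-- Merge the parts in `S` of a partition into a single part. -/
def mergePart (P : Finpartition (univ : Finset V)) (S : Finset (Finset V))
    (hS : S ⊆ P.parts) (hne : S.Nonempty) : Finpartition (univ : Finset V) where
  parts := (P.parts \ S) ∪ {S.sup id}
  supIndep := by
    rw [Finset.supIndep_iff_pairwiseDisjoint]
    intro p hp q hq hpq
    simp only [coe_union, coe_sdiff, coe_singleton, Set.mem_union, Set.mem_diff,
      Set.mem_singleton_iff, mem_coe] at hp hq
    simp only [Function.onFun, id_eq]
    rcases hp with ⟨hp1, hp2⟩ | rfl
    · rcases hq with ⟨hq1, hq2⟩ | rfl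
      · exact P.disjoint hp1 hq1 hpq
      · exact Finset.disjoint_sup_right.2 fun i hi =>
          P.disjoint hp1 (hS hi) (by rintro rfl; exact hp2 hi)
    · rcases hq with ⟨hq1, hq2⟩ | rfl
      · exact Finset.disjoint_sup_left.2 fun i hi =>
          P.disjoint (hS hi) hq1 (by rintro rfl; exact hq2 hi)
      · exact absurd rfl hpq
  sup_parts := by
    rw [Finset.sup_union, Finset.sup_singleton, id_eq, ← Finset.sup_union,
      Finset.sdiff_union_of_subset hS, P.sup_parts]
  bot_notMem := by
    intro h
    rcases Finset.mem_union.1 h with h | h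
    · exact P.bot_notMem (Finset.mem_sdiff.1 h).1
    · obtain ⟨q, hq⟩ := hne
      have hle : q ≤ S.sup id := Finset.le_sup (f := id) hq
      rw [Finset.mem_singleton] at h
      rw [← h] at hle
      exact P.ne_bot (hS hq) (le_bot_iff.1 hle)

lemma mergePart_parts (P : Finpartition (univ : Finset V)) (S : Finset (Finset V))
    (hS : S ⊆ P.parts) (hne : S.Nonempty) :
    (mergePart P S hS hne).parts = (P.parts \ S) ∪ {S.sup id} := rfl

lemma sup_not_mem_sdiff (P : Finpartition (univ : Finset V)) {S : Finset (Finset V)}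
    (hS : S ⊆ P.parts) (hne : S.Nonempty) : S.sup id ∉ P.parts \ S := by
  intro h
  rw [Finset.mem_sdiff] at h
  obtain ⟨q, hq⟩ := hne
  have hle : q ≤ S.sup id := Finset.le_sup (f := id) hq
  have hne' : q ≠ S.sup id := by rintro rfl; exact h.2 hq
  have hdisj : Disjoint q (S.sup id) := P.disjoint (hS hq) h.1 hne'
  exact P.ne_bot (hS hq) (hdisj.eq_bot_of_le hle)

lemma mergePart_card (P : Finpartition (univ : Finset V)) (S : Finset (Finset V))
    (hS : S ⊆ P.parts) (hne : S.Nonempty) :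
    (mergePart P S hS hne).parts.card = (P.parts \ S).card + 1 := by
  rw [mergePart_parts, card_union_of_disjoint (Finset.disjoint_singleton_right.2
    (sup_not_mem_sdiff P hS hne)), card_singleton]

/-- Key connectivity lemma: if the side `S` (containing `p0`) is separated from the rest
except through `p0`, then the union of the parts in `S` induces a connected subhypergraph. -/
lemma connectedIn_sup (edge : E → Finset V) (hconn : HConnected edge)
    (P : Finpartition (univ : Finset V)) (hfeas : Feasible edge P)
    (S : Finset (Finset V)) (hS : S ⊆ P.parts) (p0 : Finset V) (hp0 : p0 ∈ S)
    (hside : ∀ e p q, p ∈ P.parts → p ∉ S → q ∈ S → q ≠ p0 →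
      (edge e ∩ p).Nonempty → (edge e ∩ q).Nonempty → False) :
    ConnectedIn edge (S.sup id) := by
  have hconn' := (connectedIn_iff edge univ).1 hconn
  have hfeas' : ∀ p ∈ P.parts, ∀ X ⊆ p, X.Nonempty → X ≠ p →
      ∃ e, edge e ⊆ p ∧ (edge e ∩ X).Nonempty ∧ ((edge e ∩ p) \ X).Nonempty :=
    fun p hp => (connectedIn_iff edge p).1 (hfeas p hp)
  rw [connectedIn_iff]
  set M := S.sup id with hM
  have hpartuniq : ∀ {x : V} {p q : Finset V}, p ∈ P.parts → q ∈ P.parts →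
      x ∈ p → x ∈ q → p = q := by
    intro x p q hp hq hxp hxq
    by_contra hpq
    exact (Finset.disjoint_left.1 (P.disjoint hp hq hpq)) hxp hxq
  have hmeets : ∀ (e : E) (Y : Finset V) (x : V), x ∈ edge e → x ∈ Y →
      (edge e ∩ Y).Nonempty := fun e Y x h1 h2 => ⟨x, Finset.mem_inter.2 ⟨h1, h2⟩⟩
  intro X hXM hXne hXneM
  by_cases hcase : ∃ q ∈ S, (X ∩ q).Nonempty ∧ X ∩ q ≠ q
  · obtain ⟨q, hqS, hq1, hq2⟩ := hcase
    obtain ⟨e, heq, h1, h2⟩ := hfeas' q (hS hqS) (X ∩ q) inter_subset_right hq1 hq2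
    obtain ⟨x, hx⟩ := h1
    rw [Finset.mem_inter, Finset.mem_inter] at hx
    obtain ⟨y, hy⟩ := h2
    rw [Finset.mem_sdiff, Finset.mem_inter] at hy
    refine ⟨e, heq.trans (Finset.le_sup (f := id) hqS), hmeets e X x hx.1 hx.2.1, ⟨y, ?_⟩⟩
    rw [Finset.mem_sdiff, Finset.mem_inter]
    refine ⟨⟨hy.1.1, Finset.le_sup (f := id) hqS hy.1.2⟩, fun hyX => hy.2 ?_⟩
    rw [Finset.mem_inter]
    exact ⟨hyX, hy.1.2⟩
  · push_neg at hcase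
    have hdich : ∀ q ∈ S, q ⊆ X ∨ X ∩ q = ∅ := by
      intro q hq
      by_cases h : (X ∩ q).Nonempty
      · exact Or.inl (Finset.inter_eq_right.1 (hcase q hq h))
      · exact Or.inr (not_nonempty_iff_eq_empty.1 h)
    have hmemM : ∀ {x : V}, x ∈ M → ∃ q ∈ S, x ∈ q := by
      intro x hx
      rw [hM, Finset.mem_sup] at hx
      exact hx
    obtain ⟨x0, hx0⟩ := id hXne
    by_cases hp0X : p0 ⊆ X
    · -- case (a): p0 ⊆ X
      have hexq1 : ∃ q1 ∈ S, ¬ q1 ⊆ X := by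
        by_contra h
        push_neg at h
        refine hXneM (Finset.Subset.antisymm hXM ?_)
        intro y hy
        obtain ⟨q, hqS, hyq⟩ := hmemM hy
        exact h q hqS hyq
      obtain ⟨q1, hq1S, hq1X⟩ := hexq1
      have hq1dX : X ∩ q1 = ∅ := (hdich q1 hq1S).resolve_left hq1X
      obtain ⟨v1, hv1⟩ := P.nonempty_of_mem_parts (hS hq1S)
      set Z := X ∪ ((P.parts \ S).sup id) with hZ
      have hv1X : v1 ∉ X := by
        intro h
        have hmem : v1 ∈ X ∩ q1 := Finset.mem_inter.2 ⟨h, hv1⟩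
        rw [hq1dX] at hmem
        exact notMem_empty v1 hmem
      have hv1Z : v1 ∉ Z := by
        rw [hZ, Finset.mem_union]
        rintro (h | h)
        · exact hv1X h
        · rw [Finset.mem_sup] at h
          obtain ⟨p, hp, hv1p⟩ := h
          rw [Finset.mem_sdiff] at hp
          have heq : p = q1 := hpartuniq hp.1 (hS hq1S) hv1p hv1
          rw [heq] at hp
          exact hp.2 hq1S
      obtain ⟨e, _, h1, h2⟩ := hconn' Z (Finset.subset_univ Z)
        ⟨x0, Finset.mem_union_left _ hx0⟩
        (fun h => hv1Z (h ▸ Finset.mem_univ v1))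
      obtain ⟨y, hy⟩ := h2
      rw [Finset.mem_sdiff, Finset.mem_inter] at hy
      obtain ⟨⟨hye, _⟩, hyZ⟩ := hy
      have hyX : y ∉ X := fun h => hyZ (Finset.mem_union_left _ h)
      obtain ⟨r, hrP, hyr⟩ := P.exists_mem (Finset.mem_univ y)
      have hrS : r ∈ S := by
        by_contra h
        exact hyZ (Finset.mem_union_right _
          (Finset.le_sup (f := id) (Finset.mem_sdiff.2 ⟨hrP, h⟩) hyr))
      have hrp0 : r ≠ p0 := by
        rintro rfl
        exact hyX (hp0X hyr)
      have hmeetr : (edge e ∩ r).Nonempty := hmeets e r y hye hyr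
      have hclean : edge e ⊆ M := by
        intro w hw
        obtain ⟨p, hpP, hwp⟩ := P.exists_mem (Finset.mem_univ w)
        by_cases hpS : p ∈ S
        · exact Finset.le_sup (f := id) hpS hwp
        · exact absurd (hside e p r hpP hpS hrS hrp0 (hmeets e p w hw hwp) hmeetr)
            (fun h => h)
      refine ⟨e, hclean, ?_, ⟨y, ?_⟩⟩
      · obtain ⟨z, hz⟩ := h1
        rw [Finset.mem_inter] at hz
        rcases Finset.mem_union.1 hz.2 with h | h
        · exact hmeets e X z hz.1 h
        · exfalso
          rw [Finset.mem_sup] at h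
          obtain ⟨p, hp, hzp⟩ := h
          rw [Finset.mem_sdiff] at hp
          exact hside e p r hp.1 hp.2 hrS hrp0 (hmeets e p z hz.1 hzp) hmeetr
      · rw [Finset.mem_sdiff, Finset.mem_inter]
        exact ⟨⟨hye, hclean hye⟩, hyX⟩
    · -- case (b): p0 disjoint from X
      have hp0dX : X ∩ p0 = ∅ := (hdich p0 hp0).resolve_left hp0X
      obtain ⟨v, hv⟩ := P.nonempty_of_mem_parts (hS hp0)
      have hvX : v ∉ X := by
        intro h
        have hmem : v ∈ X ∩ p0 := Finset.mem_inter.2 ⟨h, hv⟩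
        rw [hp0dX] at hmem
        exact notMem_empty v hmem
      obtain ⟨e, _, h1, h2⟩ := hconn' X (Finset.subset_univ X) hXne
        (fun h => hvX (h ▸ Finset.mem_univ v))
      obtain ⟨x, hx⟩ := h1
      rw [Finset.mem_inter] at hx
      obtain ⟨q', hq'S, hxq'⟩ := hmemM (hXM hx.2)
      have hq'X : q' ⊆ X := by
        rcases hdich q' hq'S with h | h
        · exact h
        · exfalso
          have hmem : x ∈ X ∩ q' := Finset.mem_inter.2 ⟨hx.2, hxq'⟩
          rw [h] at hmem
          exact notMem_empty x hmem
      have hq'p0 : q' ≠ p0 := by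
        rintro rfl
        exact hp0X hq'X
      have hmeetq' : (edge e ∩ q').Nonempty := hmeets e q' x hx.1 hxq'
      have hclean : edge e ⊆ M := by
        intro w hw
        obtain ⟨p, hpP, hwp⟩ := P.exists_mem (Finset.mem_univ w)
        by_cases hpS : p ∈ S
        · exact Finset.le_sup (f := id) hpS hwp
        · exact absurd (hside e p q' hpP hpS hq'S hq'p0 (hmeets e p w hw hwp) hmeetq')
            (fun h => h)
      obtain ⟨y, hy⟩ := h2
      rw [Finset.mem_sdiff, Finset.mem_inter] at hy
      refine ⟨e, hclean, hmeets e X x hx.1 hx.2, ⟨y, ?_⟩⟩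
      rw [Finset.mem_sdiff, Finset.mem_inter]
      exact ⟨⟨hy.1.1, hclean hy.1.1⟩, hy.2⟩


lemma convex_aux1 (x y : ℝ) (hx : 0 < x) (hy : 0 < y) :
    1/(x+y) * (1:ℝ) = x/(x+y) * (1/x * 1) + (1 - x/(x+y)) * (1/y * 0) := by
  field_simp
  ring

lemma convex_aux2 (x y : ℝ) (hx : 0 < x) (hy : 0 < y) :
    1/(x+y) * (1:ℝ) = x/(x+y) * (1/x * 0) + (1 - x/(x+y)) * (1/y * 1) := by
  field_simp
  ring

lemma convex_aux3 (x y lam : ℝ) :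
    1/(x+y) * (0:ℝ) = lam * (1/x * 0) + (1 - lam) * (1/y * 0) := by ring

end AuxStmt5

/-- If `H` is connected, `P` is a feasible partition, and the shrunk
hypergraph `H_P` has a cut vertex `p0`, then `P` splits into two feasible partitions
`P₁, P₂` with `|P₁| + |P₂| = |P| + 1`, `|P₁|, |P₂| ≥ 2`, `δ(P₁), δ(P₂)` disjoint with
union `δ(P)`, and `(1/(|P|-1))·1_{δ(P)}` a proper convex combination of
`(1/(|P₁|-1))·1_{δ(P₁)}` and `(1/(|P₂|-1))·1_{δ(P₂)}`. -/
theorem stmt5 {V E : Type*} [Fintype V] [DecidableEq V] [Fintype E] [DecidableEq E]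
    (edge : E → Finset V) (hconn : HConnected edge)
    (P : Finpartition (univ : Finset V)) (hfeas : Feasible edge P)
    (p0 : {p : Finset V // p ∈ P.parts})
    (hcutvertex : ¬ ConnectedOn (shrunkEdge edge P) (univ \ {p0})) :
    ∃ P₁ P₂ : Finpartition (univ : Finset V),
      Feasible edge P₁ ∧ Feasible edge P₂ ∧
      2 ≤ P₁.parts.card ∧ 2 ≤ P₂.parts.card ∧
      P₁.parts.card + P₂.parts.card = P.parts.card + 1 ∧
      Disjoint (hcut edge P₁) (hcut edge P₂) ∧
      hcut edge P₁ ∪ hcut edge P₂ = hcut edge P ∧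
      ∃ lam : ℝ, 0 < lam ∧ lam < 1 ∧
        ∀ e : E,
          (1 / ((P.parts.card : ℝ) - 1)) * (if e ∈ hcut edge P then 1 else 0) =
            lam * ((1 / ((P₁.parts.card : ℝ) - 1)) * (if e ∈ hcut edge P₁ then 1 else 0)) +
            (1 - lam) * ((1 / ((P₂.parts.card : ℝ) - 1)) * (if e ∈ hcut edge P₂ then 1 else 0)) := by
  classical
  rw [connectedOn_iff] at hcutvertex
  push_neg at hcutvertex
  obtain ⟨X, hXW, hXne, hXneW, hXcut⟩ := hcutvertex
  -- the two sides of the cut vertex (as sets of parts)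
  set Bs : Finset {p : Finset V // p ∈ P.parts} := ((univ \ {p0}) \ X) with hBs
  set A' : Finset (Finset V) := X.image Subtype.val with hA'
  set B' : Finset (Finset V) := Bs.image Subtype.val with hB'
  -- separation property
  have hsep : ∀ (e : E) (p q : Finset V), p ∈ A' → q ∈ B' →
      (edge e ∩ p).Nonempty → (edge e ∩ q).Nonempty → False := by
    intro e p q hp hq hep heq
    obtain ⟨a, ha, rfl⟩ := Finset.mem_image.1 hp
    obtain ⟨b, hb, rfl⟩ := Finset.mem_image.1 hq
    refine absurd (hXcut e ⟨a, ?_⟩) (Finset.nonempty_iff_ne_empty.1 ⟨b, ?_⟩)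
    · rw [Finset.mem_inter, Finset.mem_inter]
      refine ⟨⟨?_, hXW ha⟩, ha⟩
      simp only [shrunkEdge, Finset.mem_filter, Finset.mem_univ, true_and]
      exact hep
    · rw [Finset.mem_sdiff, Finset.mem_inter]
      rw [hBs, Finset.mem_sdiff] at hb
      refine ⟨⟨?_, hb.1⟩, hb.2⟩
      simp only [shrunkEdge, Finset.mem_filter, Finset.mem_univ, true_and]
      exact heq
  have hA'P : A' ⊆ P.parts := by
    intro p hp
    obtain ⟨a, _, rfl⟩ := Finset.mem_image.1 hp
    exact a.2
  have hB'P : B' ⊆ P.parts := by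
    intro p hp
    obtain ⟨b, _, rfl⟩ := Finset.mem_image.1 hp
    exact b.2
  have hp0A : p0.1 ∉ A' := by
    intro h
    obtain ⟨a, ha, hav⟩ := Finset.mem_image.1 h
    have : a = p0 := Subtype.ext hav
    rw [this] at ha
    have := hXW ha
    rw [Finset.mem_sdiff, Finset.mem_singleton] at this
    exact this.2 rfl
  have hp0B : p0.1 ∉ B' := by
    intro h
    obtain ⟨b, hb, hbv⟩ := Finset.mem_image.1 h
    have hbp : b = p0 := Subtype.ext hbv
    rw [hBs, Finset.mem_sdiff, Finset.mem_sdiff, Finset.mem_singleton] at hb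
    exact hb.1.2 hbp
  have hABdisj : Disjoint A' B' := by
    rw [Finset.disjoint_left]
    intro p hp hq
    obtain ⟨a, ha, hav⟩ := Finset.mem_image.1 hp
    obtain ⟨b, hb, hbv⟩ := Finset.mem_image.1 hq
    have : a = b := Subtype.ext (hav.trans hbv.symm)
    rw [this] at ha
    rw [hBs, Finset.mem_sdiff] at hb
    exact hb.2 ha
  have hcover : ∀ p ∈ P.parts, p ∈ A' ∨ p ∈ B' ∨ p = p0.1 := by
    intro p hp
    by_cases h0 : (⟨p, hp⟩ : {p : Finset V // p ∈ P.parts}) = p0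
    · exact Or.inr (Or.inr (congrArg Subtype.val h0))
    · by_cases hX : (⟨p, hp⟩ : {p : Finset V // p ∈ P.parts}) ∈ X
      · exact Or.inl (Finset.mem_image.2 ⟨⟨p, hp⟩, hX, rfl⟩)
      · refine Or.inr (Or.inl (Finset.mem_image.2 ⟨⟨p, hp⟩, ?_, rfl⟩))
        rw [hBs, Finset.mem_sdiff, Finset.mem_sdiff, Finset.mem_singleton]
        exact ⟨⟨Finset.mem_univ _, h0⟩, hX⟩
  have hAne : A'.Nonempty := hXne.image _
  have hBne : B'.Nonempty := by
    refine Finset.Nonempty.image ?_ _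
    rw [hBs, Finset.sdiff_nonempty]
    intro h
    exact hXneW (Finset.Subset.antisymm hXW h)
  -- cardinalities
  have hcard : P.parts.card = A'.card + B'.card + 1 := by
    have hpartseq : P.parts = (A' ∪ B') ∪ {p0.1} := by
      apply Finset.Subset.antisymm
      · intro p hp
        rcases hcover p hp with h | h | h
        · exact Finset.mem_union_left _ (Finset.mem_union_left _ h)
        · exact Finset.mem_union_left _ (Finset.mem_union_right _ h)
        · exact Finset.mem_union_right _ (Finset.mem_singleton.2 h)
      · intro p hp
        rcases Finset.mem_union.1 hp with h | h
        · rcases Finset.mem_union.1 h with h | h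
          · exact hA'P h
          · exact hB'P h
        · rw [Finset.mem_singleton.1 h]; exact p0.2
    rw [hpartseq, card_union_of_disjoint, card_union_of_disjoint hABdisj, card_singleton]
    rw [Finset.disjoint_singleton_right, Finset.mem_union]
    rintro (h | h)
    · exact hp0A h
    · exact hp0B h
  -- the two merged partitions
  set S₁ : Finset (Finset V) := insert p0.1 B' with hS₁def
  set S₂ : Finset (Finset V) := insert p0.1 A' with hS₂def
  have hS₁P : S₁ ⊆ P.parts := Finset.insert_subset p0.2 hB'P
  have hS₂P : S₂ ⊆ P.parts := Finset.insert_subset p0.2 hA'P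
  have hS₁ne : S₁.Nonempty := Finset.insert_nonempty _ _
  have hS₂ne : S₂.Nonempty := Finset.insert_nonempty _ _
  set N₁ : Finset V := S₁.sup id with hN₁def
  set N₂ : Finset V := S₂.sup id with hN₂def
  set P₁ := mergePart P S₁ hS₁P hS₁ne with hP₁def
  set P₂ := mergePart P S₂ hS₂P hS₂ne with hP₂def
  have hdiff₁ : P.parts \ S₁ = A' := by
    apply Finset.Subset.antisymm
    · intro p hp
      rw [Finset.mem_sdiff, hS₁def, Finset.mem_insert] at hp
      push_neg at hp
      rcases hcover p hp.1 with h | h | h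
      · exact h
      · exact absurd h hp.2.2
      · exact absurd h hp.2.1
    · intro p hp
      rw [Finset.mem_sdiff, hS₁def, Finset.mem_insert]
      push_neg at *
      refine ⟨hA'P hp, ?_, ?_⟩
      · rintro rfl; exact hp0A hp
      · exact fun h => (Finset.disjoint_left.1 hABdisj) hp h
  have hdiff₂ : P.parts \ S₂ = B' := by
    apply Finset.Subset.antisymm
    · intro p hp
      rw [Finset.mem_sdiff, hS₂def, Finset.mem_insert] at hp
      push_neg at hp
      rcases hcover p hp.1 with h | h | h
      · exact absurd h hp.2.2
      · exact h
      · exact absurd h hp.2.1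
    · intro p hp
      rw [Finset.mem_sdiff, hS₂def, Finset.mem_insert]
      push_neg at *
      refine ⟨hB'P hp, ?_, ?_⟩
      · rintro rfl; exact hp0B hp
      · exact fun h => (Finset.disjoint_right.1 hABdisj) hp h
  have hparts₁ : P₁.parts = A' ∪ {N₁} := by
    rw [hP₁def, mergePart_parts, hdiff₁]
  have hparts₂ : P₂.parts = B' ∪ {N₂} := by
    rw [hP₂def, mergePart_parts, hdiff₂]
  have hcard₁ : P₁.parts.card = A'.card + 1 := by
    rw [hP₁def, mergePart_card, hdiff₁]
  have hcard₂ : P₂.parts.card = B'.card + 1 := by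
    rw [hP₂def, mergePart_card, hdiff₂]
  -- distinctness facts
  have hp0ne : p0.1.Nonempty := P.nonempty_of_mem_parts p0.2
  have hAN₁ : ∀ a ∈ A', a ≠ N₁ := by
    intro a ha heq
    have hle : p0.1 ≤ N₁ := Finset.le_sup (f := id) (Finset.mem_insert_self _ _)
    have hne' : p0.1 ≠ a := fun h => hp0A (h ▸ ha)
    have hdisj : Disjoint p0.1 a := P.disjoint p0.2 (hA'P ha) hne'
    rw [← heq] at hle
    obtain ⟨v, hv⟩ := hp0ne
    exact (Finset.disjoint_left.1 hdisj) hv (hle hv)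
  have hBN₂ : ∀ b ∈ B', b ≠ N₂ := by
    intro b hb heq
    have hle : p0.1 ≤ N₂ := Finset.le_sup (f := id) (Finset.mem_insert_self _ _)
    have hne' : p0.1 ≠ b := fun h => hp0B (h ▸ hb)
    have hdisj : Disjoint p0.1 b := P.disjoint p0.2 (hB'P hb) hne'
    rw [← heq] at hle
    obtain ⟨v, hv⟩ := hp0ne
    exact (Finset.disjoint_left.1 hdisj) hv (hle hv)
  have hAS₁ : ∀ a ∈ A', ∀ r ∈ S₁, a ≠ r := by
    intro a ha r hr heq
    rw [hS₁def, Finset.mem_insert] at hr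
    rcases hr with h | h
    · rw [heq, h] at ha; exact hp0A ha
    · rw [heq] at ha; exact (Finset.disjoint_left.1 hABdisj) ha h
  have hBS₂ : ∀ b ∈ B', ∀ r ∈ S₂, b ≠ r := by
    intro b hb r hr heq
    rw [hS₂def, Finset.mem_insert] at hr
    rcases hr with h | h
    · rw [heq, h] at hb; exact hp0B hb
    · rw [heq] at hb; exact (Finset.disjoint_right.1 hABdisj) hb h
  -- membership in hcut
  have hmemcut : ∀ (Q : Finpartition (univ : Finset V)) (e : E),
      e ∈ hcut edge Q ↔ ∃ p ∈ Q.parts, ∃ q ∈ Q.parts,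
        p ≠ q ∧ (edge e ∩ p).Nonempty ∧ (edge e ∩ q).Nonempty := by
    intro Q e
    simp only [hcut, Finset.mem_filter, Finset.mem_univ, true_and]
  have hmeetsN : ∀ (e : E) (S : Finset (Finset V)), (edge e ∩ S.sup id).Nonempty →
      ∃ r ∈ S, (edge e ∩ r).Nonempty := by
    intro e S h
    obtain ⟨x, hx⟩ := h
    rw [Finset.mem_inter, Finset.mem_sup] at hx
    obtain ⟨r, hr, hxr⟩ := hx.2
    exact ⟨r, hr, ⟨x, Finset.mem_inter.2 ⟨hx.1, hxr⟩⟩⟩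
  -- characterization of the two cuts
  have hcut₁ : ∀ e : E, e ∈ hcut edge P₁ ↔
      (e ∈ hcut edge P ∧ ∃ a ∈ A', (edge e ∩ a).Nonempty) := by
    intro e
    rw [hmemcut, hmemcut]
    constructor
    · rintro ⟨p, hp, q, hq, hpq, hep, heq⟩
      rw [hparts₁, Finset.mem_union, Finset.mem_singleton] at hp hq
      rcases hp with hp | rfl
      · rcases hq with hq | rfl
        · exact ⟨⟨p, hA'P hp, q, hA'P hq, hpq, hep, heq⟩, p, hp, hep⟩
        · obtain ⟨r, hr, her⟩ := hmeetsN e S₁ heq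
          exact ⟨⟨p, hA'P hp, r, hS₁P hr, hAS₁ p hp r hr, hep, her⟩, p, hp, hep⟩
      · rcases hq with hq | rfl
        · obtain ⟨r, hr, her⟩ := hmeetsN e S₁ hep
          exact ⟨⟨q, hA'P hq, r, hS₁P hr, hAS₁ q hq r hr, heq, her⟩, q, hq, heq⟩
        · exact absurd rfl hpq
    · rintro ⟨⟨p, hp, q, hq, hpq, hep, heq⟩, a, haA, hea⟩
      have hstep : ∃ s ∈ P.parts, s ≠ a ∧ (edge e ∩ s).Nonempty := by
        by_cases h : p = a
        · exact ⟨q, hq, fun hqa => hpq (h.trans hqa.symm), heq⟩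
        · exact ⟨p, hp, h, hep⟩
      obtain ⟨s, hsP, hsa, hes⟩ := hstep
      rcases hcover s hsP with h | h | h
      · exact ⟨a, by rw [hparts₁]; exact Finset.mem_union_left _ haA,
          s, by rw [hparts₁]; exact Finset.mem_union_left _ h,
          fun hh => hsa hh.symm, hea, hes⟩
      · refine ⟨a, by rw [hparts₁]; exact Finset.mem_union_left _ haA,
          N₁, by rw [hparts₁]; exact Finset.mem_union_right _ (Finset.mem_singleton_self _),
          hAN₁ a haA, hea, ?_⟩
        obtain ⟨x, hx⟩ := hes
        rw [Finset.mem_inter] at hx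
        have hmemS : s ∈ S₁ := Finset.mem_insert_of_mem h
        have hsub : s ⊆ N₁ := Finset.le_sup (f := id) hmemS
        exact ⟨x, Finset.mem_inter.2 ⟨hx.1, hsub hx.2⟩⟩
      · refine ⟨a, by rw [hparts₁]; exact Finset.mem_union_left _ haA,
          N₁, by rw [hparts₁]; exact Finset.mem_union_right _ (Finset.mem_singleton_self _),
          hAN₁ a haA, hea, ?_⟩
        obtain ⟨x, hx⟩ := hes
        rw [Finset.mem_inter] at hx
        have hmemS : p0.1 ∈ S₁ := Finset.mem_insert_self _ _
        have hsub : p0.1 ⊆ N₁ := Finset.le_sup (f := id) hmemS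
        rw [h] at hx
        exact ⟨x, Finset.mem_inter.2 ⟨hx.1, hsub hx.2⟩⟩
  have hcut₂ : ∀ e : E, e ∈ hcut edge P₂ ↔
      (e ∈ hcut edge P ∧ ∃ b ∈ B', (edge e ∩ b).Nonempty) := by
    intro e
    rw [hmemcut, hmemcut]
    constructor
    · rintro ⟨p, hp, q, hq, hpq, hep, heq⟩
      rw [hparts₂, Finset.mem_union, Finset.mem_singleton] at hp hq
      rcases hp with hp | rfl
      · rcases hq with hq | rfl
        · exact ⟨⟨p, hB'P hp, q, hB'P hq, hpq, hep, heq⟩, p, hp, hep⟩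
        · obtain ⟨r, hr, her⟩ := hmeetsN e S₂ heq
          exact ⟨⟨p, hB'P hp, r, hS₂P hr, hBS₂ p hp r hr, hep, her⟩, p, hp, hep⟩
      · rcases hq with hq | rfl
        · obtain ⟨r, hr, her⟩ := hmeetsN e S₂ hep
          exact ⟨⟨q, hB'P hq, r, hS₂P hr, hBS₂ q hq r hr, heq, her⟩, q, hq, heq⟩
        · exact absurd rfl hpq
    · rintro ⟨⟨p, hp, q, hq, hpq, hep, heq⟩, b, hbB, heb⟩
      have hstep : ∃ s ∈ P.parts, s ≠ b ∧ (edge e ∩ s).Nonempty := by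
        by_cases h : p = b
        · exact ⟨q, hq, fun hqb => hpq (h.trans hqb.symm), heq⟩
        · exact ⟨p, hp, h, hep⟩
      obtain ⟨s, hsP, hsb, hes⟩ := hstep
      rcases hcover s hsP with h | h | h
      · refine ⟨b, by rw [hparts₂]; exact Finset.mem_union_left _ hbB,
          N₂, by rw [hparts₂]; exact Finset.mem_union_right _ (Finset.mem_singleton_self _),
          hBN₂ b hbB, heb, ?_⟩
        obtain ⟨x, hx⟩ := hes
        rw [Finset.mem_inter] at hx
        have hmemS : s ∈ S₂ := Finset.mem_insert_of_mem h
        have hsub : s ⊆ N₂ := Finset.le_sup (f := id) hmemS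
        exact ⟨x, Finset.mem_inter.2 ⟨hx.1, hsub hx.2⟩⟩
      · exact ⟨b, by rw [hparts₂]; exact Finset.mem_union_left _ hbB,
          s, by rw [hparts₂]; exact Finset.mem_union_left _ h,
          fun hh => hsb hh.symm, heb, hes⟩
      · refine ⟨b, by rw [hparts₂]; exact Finset.mem_union_left _ hbB,
          N₂, by rw [hparts₂]; exact Finset.mem_union_right _ (Finset.mem_singleton_self _),
          hBN₂ b hbB, heb, ?_⟩
        obtain ⟨x, hx⟩ := hes
        rw [Finset.mem_inter] at hx
        have hmemS : p0.1 ∈ S₂ := Finset.mem_insert_self _ _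
        have hsub : p0.1 ⊆ N₂ := Finset.le_sup (f := id) hmemS
        rw [h] at hx
        exact ⟨x, Finset.mem_inter.2 ⟨hx.1, hsub hx.2⟩⟩
  -- disjointness of the cuts
  have hdisjcut : Disjoint (hcut edge P₁) (hcut edge P₂) := by
    rw [Finset.disjoint_left]
    intro e h1 h2
    obtain ⟨_, a, haA, hea⟩ := (hcut₁ e).1 h1
    obtain ⟨_, b, hbB, heb⟩ := (hcut₂ e).1 h2
    exact hsep e a b haA hbB hea heb
  -- union of the cuts
  have huniocut : hcut edge P₁ ∪ hcut edge P₂ = hcut edge P := by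
    apply Finset.Subset.antisymm
    · intro e he
      rcases Finset.mem_union.1 he with h | h
      · exact ((hcut₁ e).1 h).1
      · exact ((hcut₂ e).1 h).1
    · intro e he
      obtain ⟨p, hp, q, hq, hpq, hep, heq⟩ := (hmemcut P e).1 he
      by_cases hA : ∃ a ∈ A', (edge e ∩ a).Nonempty
      · exact Finset.mem_union_left _ ((hcut₁ e).2 ⟨he, hA⟩)
      · push_neg at hA
        have hpB : p ∈ B' ∨ p = p0.1 := by
          rcases hcover p hp with h | h | h
          · exact absurd hep (by simpa using hA p h)
          · exact Or.inl h
          · exact Or.inr h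
        have hqB : q ∈ B' ∨ q = p0.1 := by
          rcases hcover q hq with h | h | h
          · exact absurd heq (by simpa using hA q h)
          · exact Or.inl h
          · exact Or.inr h
        have hbex : ∃ b ∈ B', (edge e ∩ b).Nonempty := by
          rcases hpB with h | h
          · exact ⟨p, h, hep⟩
          · rcases hqB with h' | h'
            · exact ⟨q, h', heq⟩
            · exact absurd (h.trans h'.symm) hpq
        exact Finset.mem_union_right _ ((hcut₂ e).2 ⟨he, hbex⟩)
  -- feasibility
  have hfeas₁ : Feasible edge P₁ := by
    intro p hp
    rw [hparts₁, Finset.mem_union, Finset.mem_singleton] at hp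
    rcases hp with hp | rfl
    · exact hfeas p (hA'P hp)
    · refine connectedIn_sup edge hconn P hfeas S₁ hS₁P p0.1
        (by rw [hS₁def]; exact Finset.mem_insert_self _ _) ?_
      intro e p q hpP hpS hqS hqp0 hep heq
      have hpA : p ∈ A' := by rw [← hdiff₁, Finset.mem_sdiff]; exact ⟨hpP, hpS⟩
      have hqB : q ∈ B' := by
        rw [hS₁def, Finset.mem_insert] at hqS
        exact hqS.resolve_left hqp0
      exact hsep e p q hpA hqB hep heq
  have hfeas₂ : Feasible edge P₂ := by
    intro p hp
    rw [hparts₂, Finset.mem_union, Finset.mem_singleton] at hp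
    rcases hp with hp | rfl
    · exact hfeas p (hB'P hp)
    · refine connectedIn_sup edge hconn P hfeas S₂ hS₂P p0.1
        (by rw [hS₂def]; exact Finset.mem_insert_self _ _) ?_
      intro e p q hpP hpS hqS hqp0 hep heq
      have hpB : p ∈ B' := by rw [← hdiff₂, Finset.mem_sdiff]; exact ⟨hpP, hpS⟩
      have hqA : q ∈ A' := by
        rw [hS₂def, Finset.mem_insert] at hqS
        exact hqS.resolve_left hqp0
      exact hsep e q p hqA hpB heq hep
  -- cardinalities of the new partitions
  have hA1 : 1 ≤ A'.card := Finset.card_pos.2 hAne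
  have hB1 : 1 ≤ B'.card := Finset.card_pos.2 hBne
  refine ⟨P₁, P₂, hfeas₁, hfeas₂, by omega, by omega, by omega, hdisjcut, huniocut, ?_⟩
  -- the convex combination
  set a : ℝ := (A'.card : ℝ) with hadef
  set b : ℝ := (B'.card : ℝ) with hbdef
  have ha : 0 < a := by rw [hadef]; exact_mod_cast hA1
  have hb : 0 < b := by rw [hbdef]; exact_mod_cast hB1
  have hab : 0 < a + b := by linarith
  refine ⟨a / (a + b), div_pos ha hab, (div_lt_one hab).2 (by linarith), ?_⟩
  intro e
  have hk : ((P.parts.card : ℝ) - 1) = a + b := by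
    rw [hcard, hadef, hbdef]; push_cast; ring
  have hk1 : ((P₁.parts.card : ℝ) - 1) = a := by
    rw [hcard₁, hadef]; push_cast; ring
  have hk2 : ((P₂.parts.card : ℝ) - 1) = b := by
    rw [hcard₂, hbdef]; push_cast; ring
  rw [hk, hk1, hk2]
  by_cases h1 : e ∈ hcut edge P₁
  · have hP : e ∈ hcut edge P := ((hcut₁ e).1 h1).1
    have h2 : e ∉ hcut edge P₂ := fun h => (Finset.disjoint_left.1 hdisjcut) h1 h
    rw [if_pos hP, if_pos h1, if_neg h2]
    exact convex_aux1 a b ha hb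
  · by_cases h2 : e ∈ hcut edge P₂
    · have hP : e ∈ hcut edge P := ((hcut₂ e).1 h2).1
      rw [if_pos hP, if_neg h1, if_pos h2]
      exact convex_aux2 a b ha hb
    · have hP : e ∉ hcut edge P := by
        rw [← huniocut, Finset.mem_union]
        rintro (h | h)
        · exact h1 h
        · exact h2 h
      rw [if_neg hP, if_neg h1, if_neg h2]
      exact convex_aux3 a b _
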